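/- The relation ≺ on words over interval letters, where u ≺ v if some commutation-permutation of u is obtained from v by replacing at least one letter s of v by a (possibly empty) product of proper subletters of s, is transitive and well-founded. -/

import Mathlib

structure Letter (N : ℕ) where
  lo : ℕ
  hi : ℕ
  lo_le_hi : lo ≤ hi
  hi_le : hi ≤ N

namespace PS

/-- `t` is a (non-strict) subletter of `s`. -/
def Sub {N : ℕ} (t s : Letter N) : Prop := s.lo ≤ t.lo ∧ t.hi ≤ s.hi

/-- `t` is a proper subletter of `s`. -/
def PSub {N : ℕ} (t s : Letter N) : Prop := Sub t s ∧ t ≠ s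

/-- Two letters commute iff they have distance at least 2. -/
def Comm {N : ℕ} (s t : Letter N) : Prop := s.hi + 2 ≤ t.lo ∨ t.hi + 2 ≤ s.lo

abbrev Word (N : ℕ) := List (Letter N)

/-- Commutation step: swap two adjacent commuting letters. -/
def SwapStep {N : ℕ} (u v : Word N) : Prop :=
  ∃ (x y : Word N) (s t : Letter N),
    Comm s t ∧ u = x ++ s :: t :: y ∧ v = x ++ t :: s :: y

/-- Cancellation step: replace an occurrence `s·t` or `t·s` by `s`, when `t ⊆ s`. -/
def CancelStep {N : ℕ} (u v : Word N) : Prop :=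
  ∃ (x y : Word N) (s t : Letter N),
    Sub t s ∧ (u = x ++ s :: t :: y ∨ u = x ++ t :: s :: y) ∧ v = x ++ s :: y

/-- Splitting step: replace an occurrence `s·s` by a (possibly empty) product of
proper subletters of `s`. -/
def SplitStep {N : ℕ} (u v : Word N) : Prop :=
  ∃ (x y : Word N) (s : Letter N) (l : Word N),
    (∀ t ∈ l, PSub t s) ∧ u = x ++ s :: s :: y ∧ v = x ++ l ++ y

/-- Commutation-equivalence of words. -/
def WEquiv {N : ℕ} : Word N → Word N → Prop := Relation.ReflTransGen SwapStep

/-- Reduction: finitely many commutation and cancellation steps. -/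
def Red {N : ℕ} : Word N → Word N → Prop :=
  Relation.ReflTransGen (fun u v => SwapStep u v ∨ CancelStep u v)

/-- Strong reduction: also allowing splitting steps. -/
def SRed {N : ℕ} : Word N → Word N → Prop :=
  Relation.ReflTransGen (fun u v => SwapStep u v ∨ CancelStep u v ∨ SplitStep u v)

/-- The congruence defining the monoid Γ. -/
def GammaRel {N : ℕ} : Word N → Word N → Prop :=
  Relation.EqvGen (fun u v => SwapStep u v ∨ CancelStep u v)

/-- A word is reduced if there is no pair of occurrences `i ≠ j` with `sᵢ ⊆ sⱼ`
such that `sᵢ` commutes with every letter strictly between them. -/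
def Reduced {N : ℕ} (w : Word N) : Prop :=
  ¬ ∃ (x y z : Word N) (a b : Letter N),
      w = x ++ a :: (y ++ b :: z) ∧
      ((Sub a b ∧ ∀ r ∈ y, Comm a r) ∨ (Sub b a ∧ ∀ r ∈ y, Comm b r))

/-- The letter `s` is left-absorbed by the word `v`. -/
def LAbsLetter {N : ℕ} (s : Letter N) (v : Word N) : Prop :=
  ∃ (x : Word N) (t : Letter N) (y : Word N),
    v = x ++ t :: y ∧ Sub s t ∧ ∀ r ∈ x, Comm s r

/-- The letter `s` is properly left-absorbed by the word `v`. -/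
def PLAbsLetter {N : ℕ} (s : Letter N) (v : Word N) : Prop :=
  ∃ (x : Word N) (t : Letter N) (y : Word N),
    v = x ++ t :: y ∧ PSub s t ∧ ∀ r ∈ x, Comm s r

/-- The letter `s` is right-absorbed by the word `w`. -/
def RAbsLetter {N : ℕ} (s : Letter N) (w : Word N) : Prop :=
  ∃ (x : Word N) (t : Letter N) (y : Word N),
    w = x ++ t :: y ∧ Sub s t ∧ ∀ r ∈ y, Comm s r

/-- The letter `s` is properly right-absorbed by the word `w`. -/
def PRAbsLetter {N : ℕ} (s : Letter N) (w : Word N) : Prop :=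
  ∃ (x : Word N) (t : Letter N) (y : Word N),
    w = x ++ t :: y ∧ PSub s t ∧ ∀ r ∈ y, Comm s r

/-- The word `u` is left-absorbed by `v`. -/
def LAbsWord {N : ℕ} (u v : Word N) : Prop := ∀ s ∈ u, LAbsLetter s v

/-- `v` bites `u` from the right: `v` left-absorbs some letter of the final segment of `u`. -/
def BitesRight {N : ℕ} (v u : Word N) : Prop :=
  ∃ (x : Word N) (s : Letter N) (y : Word N),
    u = x ++ s :: y ∧ (∀ r ∈ y, Comm s r) ∧ LAbsLetter s v

end PS

namespace PS

/-- `Repl v u b`: `u` is obtained from `v` by keeping some letters and replacing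
others by (possibly empty) products of proper subletters; `b = true` iff at least
one replacement occurred. -/
inductive Repl {N : ℕ} : Word N → Word N → Bool → Prop
  | nil : Repl [] [] false
  | keep {v u : Word N} {b : Bool} (s : Letter N) :
      Repl v u b → Repl (s :: v) (s :: u) b
  | split {v u : Word N} {b : Bool} (s : Letter N) (l : Word N)
      (hl : ∀ t ∈ l, PSub t s) :
      Repl v u b → Repl (s :: v) (l ++ u) true

/-- `u ≺ v`: some commutation-permutation of `u` is obtained from `v` by replacing
at least one letter of `v` by a product of proper subletters. -/
def Prec {N : ℕ} (u v : Word N) : Prop :=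
  ∃ u' : Word N, WEquiv u u' ∧ Repl v u' true

/-- `u ⪯ v`. -/
def Preceq {N : ℕ} (u v : Word N) : Prop := Prec u v ∨ WEquiv u v

end PS

namespace PrecProof

open PS

variable {N : ℕ}

theorem Letter.ext' {a b : Letter N} (h1 : a.lo = b.lo) (h2 : a.hi = b.hi) : a = b := by
  cases a; cases b; simp_all

theorem sub_refl (s : Letter N) : Sub s s := ⟨le_refl _, le_refl _⟩

theorem sub_trans {a b c : Letter N} (h1 : Sub a b) (h2 : Sub b c) : Sub a c :=
  ⟨le_trans h2.1 h1.1, le_trans h1.2 h2.2⟩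

theorem sub_antisymm {a b : Letter N} (h1 : Sub a b) (h2 : Sub b a) : a = b :=
  Letter.ext' (le_antisymm h2.1 h1.1) (le_antisymm h1.2 h2.2)

theorem psub_of_sub_psub {a b c : Letter N} (h1 : Sub a b) (h2 : PSub b c) : PSub a c := by
  refine ⟨sub_trans h1 h2.1, ?_⟩
  rintro rfl
  exact h2.2 (sub_antisymm h2.1 h1)

theorem comm_symm {s t : Letter N} (h : Comm s t) : Comm t s := h.symm

theorem comm_sub {s t r : Letter N} (h : Comm s t) (hr : Sub r t) : Comm s r := by
  have h1 := hr.1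
  have h2 := hr.2
  rcases h with h | h
  · exact Or.inl (by omega)
  · exact Or.inr (by omega)

/-! ### WEquiv basics -/

theorem swapStep_symm {u v : Word N} (h : SwapStep u v) : SwapStep v u := by
  obtain ⟨x, y, s, t, hc, hu, hv⟩ := h
  exact ⟨x, y, t, s, comm_symm hc, hv, hu⟩

theorem wequiv_refl (u : Word N) : WEquiv u u := Relation.ReflTransGen.refl

theorem wequiv_trans {u v w : Word N} (h1 : WEquiv u v) (h2 : WEquiv v w) : WEquiv u w :=
  Relation.ReflTransGen.trans h1 h2

theorem wequiv_symm {u v : Word N} (h : WEquiv u v) : WEquiv v u :=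
  (@Relation.ReflTransGen.stdSymm _ _ ⟨fun _ _ => swapStep_symm⟩).symm _ _ h

theorem wequiv_single {u v : Word N} (h : SwapStep u v) : WEquiv u v :=
  Relation.ReflTransGen.single h

/-- Move a letter `s` rightward through a list of letters all commuting with it. -/
theorem wequiv_move (s : Letter N) :
    ∀ (l x y : Word N), (∀ r ∈ l, Comm s r) →
      WEquiv (x ++ s :: (l ++ y)) (x ++ l ++ (s :: y))
  | [], x, y, _ => by simpa using wequiv_refl _
  | r :: l, x, y, h => by
    have step : SwapStep (x ++ s :: r :: (l ++ y)) (x ++ r :: s :: (l ++ y)) :=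
      ⟨x, l ++ y, s, r, h r (by simp), rfl, rfl⟩
    have ih := wequiv_move s l (x ++ [r]) y (fun r' hr' => h r' (by simp [hr']))
    have e1 : (x ++ [r]) ++ s :: (l ++ y) = x ++ r :: s :: (l ++ y) := by simp
    have e2 : (x ++ [r]) ++ l ++ (s :: y) = x ++ (r :: l) ++ (s :: y) := by simp
    rw [e1, e2] at ih
    exact Relation.ReflTransGen.head step ih

/-- Swap two blocks of pairwise commuting letters. -/
theorem wequiv_blocks :
    ∀ (l1 l2 x y : Word N), (∀ r1 ∈ l1, ∀ r2 ∈ l2, Comm r1 r2) →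
      WEquiv (x ++ l1 ++ (l2 ++ y)) (x ++ l2 ++ (l1 ++ y))
  | [], l2, x, y, _ => by simpa using wequiv_refl _
  | r :: l1, l2, x, y, h => by
    have ih := wequiv_blocks l1 l2 (x ++ [r]) y (fun r1 h1 r2 h2 => h r1 (by simp [h1]) r2 h2)
    have e1 : (x ++ [r]) ++ l1 ++ (l2 ++ y) = x ++ (r :: l1) ++ (l2 ++ y) := by simp
    have e2 : (x ++ [r]) ++ l2 ++ (l1 ++ y) = x ++ r :: (l2 ++ (l1 ++ y)) := by simp
    rw [e1, e2] at ih
    have mv := wequiv_move r l2 x (l1 ++ y) (fun r2 h2 => h r (by simp) r2 h2)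
    have e3 : x ++ l2 ++ (r :: (l1 ++ y)) = x ++ l2 ++ ((r :: l1) ++ y) := by simp
    rw [e3] at mv
    exact wequiv_trans ih mv

/-! ### Repl basics -/

theorem repl_nil_inv {u : Word N} {b : Bool} (h : Repl [] u b) : u = [] ∧ b = false := by
  cases h; exact ⟨rfl, rfl⟩

theorem repl_append {v1 u1 v2 u2 : Word N} {b1 b2 : Bool}
    (h1 : Repl v1 u1 b1) (h2 : Repl v2 u2 b2) : Repl (v1 ++ v2) (u1 ++ u2) (b1 || b2) := by
  induction h1 with
  | nil => simpa using h2
  | keep s _ ih => exact Repl.keep s ih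
  | split s l hl _ ih =>
    have := Repl.split s l hl ih
    simpa using this

theorem repl_append_inv :
    ∀ {v1 v2 u : Word N} {b : Bool}, Repl (v1 ++ v2) u b →
      ∃ u1 u2 b1 b2, u = u1 ++ u2 ∧ b = (b1 || b2) ∧ Repl v1 u1 b1 ∧ Repl v2 u2 b2 := by
  intro v1
  induction v1 with
  | nil =>
    intro v2 u b h
    exact ⟨[], u, false, b, by simp, by simp, Repl.nil, h⟩
  | cons s v1 ih =>
    intro v2 u b h
    cases h with
    | keep _ h' =>
      obtain ⟨u1, u2, b1, b2, rfl, rfl, hr1, hr2⟩ := ih h'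
      exact ⟨s :: u1, u2, b1, b2, rfl, rfl, Repl.keep s hr1, hr2⟩
    | split _ l hl h' =>
      obtain ⟨u1, u2, b1, b2, rfl, rfl, hr1, hr2⟩ := ih h'
      exact ⟨l ++ u1, u2, true, b2, by simp, by simp, Repl.split s l hl hr1, hr2⟩

theorem repl_sub {v u : Word N} {b : Bool} (h : Repl v u b) :
    ∀ t ∈ u, ∃ t' ∈ v, Sub t t' := by
  induction h with
  | nil => simp
  | keep s _ ih =>
    intro t ht
    rcases List.mem_cons.1 ht with rfl | ht
    · exact ⟨t, by simp, sub_refl t⟩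
    · obtain ⟨t', ht', hs⟩ := ih t ht
      exact ⟨t', by simp [ht'], hs⟩
  | split s l hl _ ih =>
    intro t ht
    rcases List.mem_append.1 ht with ht | ht
    · exact ⟨s, by simp, (hl t ht).1⟩
    · obtain ⟨t', ht', hs⟩ := ih t ht
      exact ⟨t', by simp [ht'], hs⟩

theorem repl_trans {v u : Word N} {b1 : Bool} (h : Repl v u b1) :
    ∀ {w : Word N} {b2 : Bool}, Repl u w b2 → Repl v w (b1 || b2) := by
  induction h with
  | nil =>
    intro w b2 h2
    obtain ⟨rfl, rfl⟩ := repl_nil_inv h2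
    exact Repl.nil
  | keep s _ ih =>
    intro w b2 h2
    cases h2 with
    | keep _ h' => exact Repl.keep s (ih h')
    | split _ l hl h' =>
      have := Repl.split s l hl (ih h')
      simpa using this
  | split s l hl h ih =>
    intro w b2 h2
    obtain ⟨w1, w2, bA, bB, rfl, rfl, hr1, hr2⟩ := repl_append_inv h2
    have hw1 : ∀ t ∈ w1, PSub t s := by
      intro t ht
      obtain ⟨t', ht', hs⟩ := repl_sub hr1 t ht
      exact psub_of_sub_psub hs (hl t' ht')
    exact Repl.split s w1 hw1 (ih hr2)

/-! ### Transport of Repl along swaps -/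

theorem repl_swap {v v' u : Word N} {b : Bool} (hs : SwapStep v v') (h : Repl v u b) :
    ∃ u', WEquiv u u' ∧ Repl v' u' b := by
  obtain ⟨x, y, s, t, hc, rfl, rfl⟩ := hs
  obtain ⟨u1, u2, bx, b2, rfl, rfl, hx, h2⟩ := repl_append_inv (v1 := x) h
  cases h2 with
  | keep _ h2 =>
    cases h2 with
    | keep _ h3 =>
      -- keep s, keep t
      rename_i b3
      refine ⟨u1 ++ t :: s :: _, wequiv_single ⟨u1, _, s, t, hc, rfl, rfl⟩, ?_⟩
      exact repl_append hx (Repl.keep t (Repl.keep s h3))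
    | @split _ u3 b3 _ l hl h3 =>
      -- keep s, split t ↦ l
      refine ⟨u1 ++ (l ++ s :: u3), ?_, ?_⟩
      · have := wequiv_move s l u1 u3 (fun r hr => comm_sub hc (hl r hr).1)
        simpa using this
      · have := repl_append hx (Repl.split t l hl (Repl.keep s h3))
        simpa using this
  | split _ l hl h2 =>
    cases h2 with
    | @keep _ u3 b3 _ h3 =>
      -- split s ↦ l, keep t
      refine ⟨u1 ++ t :: (l ++ u3), ?_, ?_⟩
      · have := wequiv_move t l u1 u3 (fun r hr => comm_sub (comm_symm hc) (hl r hr).1)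
        have := wequiv_symm this
        simpa using this
      · have := repl_append hx (Repl.keep t (Repl.split s l hl h3))
        simpa using this
    | @split _ u3 b3 _ l2 hl2 h3 =>
      -- split s ↦ l, split t ↦ l2
      refine ⟨u1 ++ (l2 ++ (l ++ u3)), ?_, ?_⟩
      · have hcomm : ∀ r1 ∈ l, ∀ r2 ∈ l2, Comm r1 r2 := by
          intro r1 h1 r2 h2
          exact comm_symm (comm_sub (comm_symm (comm_sub hc (hl2 r2 h2).1)) (hl r1 h1).1)
        have := wequiv_blocks l l2 u1 u3 hcomm
        simpa using this
      · have := repl_append hx (Repl.split t l2 hl2 (Repl.split s l hl h3))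
        simpa using this

theorem repl_wequiv {v v' u : Word N} {b : Bool} (h : Repl v u b) (he : WEquiv v v') :
    ∃ u', WEquiv u u' ∧ Repl v' u' b := by
  induction he with
  | refl => exact ⟨u, wequiv_refl u, h⟩
  | tail _ hstep ih =>
    obtain ⟨u1, he1, hr1⟩ := ih
    obtain ⟨u2, he2, hr2⟩ := repl_swap hstep hr1
    exact ⟨u2, wequiv_trans he1 he2, hr2⟩

theorem prec_trans {u v w : Word N} (h1 : Prec u v) (h2 : Prec v w) : Prec u w := by
  obtain ⟨u', heu, hru⟩ := h1
  obtain ⟨v', hev, hrv⟩ := h2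
  obtain ⟨u'', heu'', hru''⟩ := repl_wequiv hru hev
  exact ⟨u'', wequiv_trans heu heu'', by simpa using repl_trans hrv hru''⟩

/-! ### Rank -/

/-- The size (number of generators minus one) of a letter. -/
def sz (s : Letter N) : ℕ := s.hi - s.lo

theorem psub_sz {t s : Letter N} (h : PSub t s) : sz t < sz s := by
  obtain ⟨⟨h1, h2⟩, hne⟩ := h
  have h3 := t.lo_le_hi
  have h4 := s.lo_le_hi
  by_contra hc
  refine hne (Letter.ext' ?_ ?_) <;> (unfold sz at hc; omega)

/-- Index of a letter: larger letters get smaller (more significant) indices. -/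
def idxF (s : Letter N) : Fin (N + 1) := ⟨N - sz s, by omega⟩

/-- Rank of a word: the finitely supported count of letters by index. -/
noncomputable def cnt (w : Word N) : Fin (N + 1) →₀ ℕ :=
  (w.map fun s => Finsupp.single (idxF s) 1).sum

theorem cnt_nil : cnt ([] : Word N) = 0 := rfl

theorem cnt_cons (s : Letter N) (w : Word N) :
    cnt (s :: w) = Finsupp.single (idxF s) 1 + cnt w := by
  simp [cnt]

theorem cnt_append (a b : Word N) : cnt (a ++ b) = cnt a + cnt b := by
  simp [cnt]

/-- The strict lexicographic order on ranks. -/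
def L (a b : Fin (N + 1) →₀ ℕ) : Prop := Finsupp.Lex (· < ·) (· < ·) a b

theorem L_def {a b : Fin (N + 1) →₀ ℕ} :
    L a b ↔ ∃ j, (∀ d, d < j → a d = b d) ∧ a j < b j := Finsupp.lex_def

theorem L_add_left {a b : Fin (N + 1) →₀ ℕ} (d : Fin (N + 1) →₀ ℕ) (h : L a b) :
    L (d + a) (d + b) := by
  obtain ⟨j, hpre, hlt⟩ := L_def.1 h
  refine L_def.2 ⟨j, fun i hi => ?_, ?_⟩
  · rw [Finsupp.add_apply, Finsupp.add_apply, hpre i hi]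
  · rw [Finsupp.add_apply, Finsupp.add_apply]
    omega

theorem L_wf : WellFounded (L (N := N)) :=
  Finsupp.Lex.wellFounded_of_finite (· < ·) (wellFounded_lt (α := ℕ))

theorem cnt_small {s : Letter N} {l : Word N} (hl : ∀ t ∈ l, PSub t s) :
    ∀ j ≤ idxF s, cnt l j = 0 := by
  induction l with
  | nil => simp [cnt_nil]
  | cons t l ih =>
    intro j hj
    have ht := psub_sz (hl t (by simp))
    have hsz : sz s ≤ N := by
      have := s.hi_le; unfold sz; omega
    have hne : idxF t ≠ j := by
      have hjv : (j : ℕ) ≤ N - sz s := hj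
      intro h
      apply_fun (fun x => (x : ℕ)) at h
      simp only [idxF] at h
      omega
    rw [cnt_cons, Finsupp.add_apply, Finsupp.single_apply, if_neg hne,
      ih (fun t' ht' => hl t' (by simp [ht'])) j hj]

theorem L_key {i0 : Fin (N + 1)} {d a b : Fin (N + 1) →₀ ℕ}
    (hd : ∀ j ≤ i0, d j = 0) (hab : a = b ∨ L a b) :
    L (d + a) (Finsupp.single i0 1 + b) := by
  rcases hab with rfl | hab
  · refine L_def.2 ⟨i0, fun j hj => ?_, ?_⟩
    · rw [Finsupp.add_apply, Finsupp.add_apply, hd j hj.le,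
        Finsupp.single_apply, if_neg hj.ne']
    · rw [Finsupp.add_apply, Finsupp.add_apply, hd i0 le_rfl,
        Finsupp.single_apply, if_pos rfl]
      omega
  · obtain ⟨i1, hpre, hlt⟩ := L_def.1 hab
    rcases le_or_gt i0 i1 with hle | hlt'
    · refine L_def.2 ⟨i0, fun j hj => ?_, ?_⟩
      · rw [Finsupp.add_apply, Finsupp.add_apply, hd j hj.le,
          Finsupp.single_apply, if_neg hj.ne', hpre j (lt_of_lt_of_le hj hle)]
      · rw [Finsupp.add_apply, Finsupp.add_apply, hd i0 le_rfl,
          Finsupp.single_apply, if_pos rfl]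
        rcases eq_or_lt_of_le hle with rfl | hlt2
        · omega
        · rw [hpre i0 hlt2]; omega
    · refine L_def.2 ⟨i1, fun j hj => ?_, ?_⟩
      · rw [Finsupp.add_apply, Finsupp.add_apply, hd j (le_of_lt (hj.trans hlt')),
          Finsupp.single_apply, if_neg (hj.trans hlt').ne', hpre j hj]
      · rw [Finsupp.add_apply, Finsupp.add_apply, hd i1 hlt'.le,
          Finsupp.single_apply, if_neg hlt'.ne']
        simpa using hlt

theorem repl_lt {v u : Word N} {b : Bool} (h : Repl v u b) :
    (u = v ∧ b = false) ∨ (L (cnt u) (cnt v) ∧ b = true) := by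
  induction h with
  | nil => exact Or.inl ⟨rfl, rfl⟩
  | keep s _ ih =>
    rcases ih with ⟨rfl, rfl⟩ | ⟨hL, rfl⟩
    · exact Or.inl ⟨rfl, rfl⟩
    · refine Or.inr ⟨?_, rfl⟩
      rw [cnt_cons, cnt_cons]
      exact L_add_left _ hL
  | split s l hl h ih =>
    refine Or.inr ⟨?_, rfl⟩
    rw [cnt_append, cnt_cons]
    refine L_key (cnt_small hl) ?_
    rcases ih with ⟨rfl, _⟩ | ⟨hL, _⟩
    · exact Or.inl rfl
    · exact Or.inr hL

theorem swap_cnt {u v : Word N} (h : SwapStep u v) : cnt u = cnt v := by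
  obtain ⟨x, y, s, t, _, rfl, rfl⟩ := h
  rw [cnt_append, cnt_append, cnt_cons, cnt_cons, cnt_cons, cnt_cons,
    add_left_comm (Finsupp.single (idxF s) 1)]

theorem wequiv_cnt {u v : Word N} (h : WEquiv u v) : cnt u = cnt v := by
  induction h with
  | refl => rfl
  | tail _ hstep ih => exact ih.trans (swap_cnt hstep)

theorem prec_lt {u v : Word N} (h : Prec u v) : L (cnt u) (cnt v) := by
  obtain ⟨u', he, hr⟩ := h
  rcases repl_lt hr with ⟨_, hb⟩ | ⟨hL, _⟩
  · exact absurd hb (by simp)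
  · rw [wequiv_cnt he]
    exact hL

end PrecProof

open PS in
/-- The relation `≺` is transitive and well-founded. -/
theorem prec_transitive_wellFounded {N : ℕ} :
    Transitive (Prec (N := N)) ∧ WellFounded (Prec (N := N)) := by
  constructor
  · intro u v w h1 h2
    exact PrecProof.prec_trans h1 h2
  · exact Subrelation.wf (fun {u v} h => PrecProof.prec_lt h)
      (InvImage.wf PrecProof.cnt PrecProof.L_wf)
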